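/- Let A be an n×n real matrix all of whose eigenvalues have real part less than −k for some k > 0. Then there exists an inner product ⟨·,·⟩ on ℝ^n such that ⟨Ax, x⟩ ≤ −k⟨x, x⟩ for all x ∈ ℝ^n. -/

import Mathlib

open Matrix

set_option linter.dupNamespace false

open Complex Module DirectSum

namespace Lyap


lemma dot_self_eq {m : Type*} [Fintype m] (v : m → ℂ) :
    star v ⬝ᵥ v = ((∑ i, Complex.normSq (v i) : ℝ) : ℂ) := by
  push_cast
  simp only [dotProduct, Pi.star_apply, RCLike.star_def]
  exact Finset.sum_congr rfl fun i _ => by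
    rw [Complex.normSq_eq_conj_mul_self]

lemma dot_self_re {m : Type*} [Fintype m] (v : m → ℂ) :
    (star v ⬝ᵥ v).re = ∑ i, Complex.normSq (v i) := by
  rw [dot_self_eq]; exact Complex.ofReal_re _

lemma dot_self_re_nonneg {m : Type*} [Fintype m] (v : m → ℂ) :
    0 ≤ (star v ⬝ᵥ v).re := by
  rw [dot_self_re]
  exact Finset.sum_nonneg fun i _ => Complex.normSq_nonneg _

lemma dot_self_re_eq_zero {m : Type*} [Fintype m] {v : m → ℂ}
    (h : (star v ⬝ᵥ v).re = 0) : v = 0 := by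
  rw [dot_self_re] at h
  funext i
  have := (Finset.sum_eq_zero_iff_of_nonneg
    (fun i _ => Complex.normSq_nonneg (v i))).mp h i (Finset.mem_univ i)
  simpa using Complex.normSq_eq_zero.mp this

lemma dot_conj {m : Type*} [Fintype m] (u v : m → ℂ) :
    star v ⬝ᵥ u = starRingEnd ℂ (star u ⬝ᵥ v) := by
  simp only [dotProduct, Pi.star_apply, map_sum, _root_.map_mul, RCLike.star_def,
    Complex.conj_conj]
  exact Finset.sum_congr rfl fun i _ => mul_comm _ _

lemma amgm {m : Type*} [Fintype m] (u v : m → ℂ) {t : ℝ} (ht : 0 < t) :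
    (star u ⬝ᵥ v).re ≤ 1/(2*t) * (star u ⬝ᵥ u).re + t/2 * (star v ⬝ᵥ v).re := by
  have h0 : 0 ≤ (star (u - t • v) ⬝ᵥ (u - t • v)).re := dot_self_re_nonneg _
  have hexp : star (u - t • v) ⬝ᵥ (u - t • v)
      = star u ⬝ᵥ u - (t:ℂ) * (star u ⬝ᵥ v) - (t:ℂ) * (star v ⬝ᵥ u)
        + (t:ℂ)^2 * (star v ⬝ᵥ v) := by
    have hst : star ((t:ℝ) • v) = (t:ℂ) • star v := by
      ext i; simp [RCLike.star_def, Complex.real_smul]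
    rw [star_sub, hst, show ((t:ℝ) • v) = ((t:ℂ) • v) from funext fun i => by
      simp [Complex.real_smul]]
    simp only [sub_dotProduct, dotProduct_sub, smul_dotProduct, dotProduct_smul,
      smul_eq_mul]
    ring
  have hre : (star v ⬝ᵥ u).re = (star u ⬝ᵥ v).re := by
    rw [dot_conj u v]; exact Complex.conj_re _
  have hsq : ((t:ℂ))^2 = ((t^2 : ℝ) : ℂ) := by push_cast; ring
  rw [hexp, hsq] at h0
  simp only [sub_re, add_re, Complex.re_ofReal_mul, hre] at h0
  have h2 : 2 * t * (star u ⬝ᵥ v).re ≤ (star u ⬝ᵥ u).re + t^2 * (star v ⬝ᵥ v).re := by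
    nlinarith [h0]
  have ht' : (0:ℝ) < 2*t := by positivity
  calc (star u ⬝ᵥ v).re = (2*t*(star u ⬝ᵥ v).re)/(2*t) := by field_simp
    _ ≤ ((star u ⬝ᵥ u).re + t^2 * (star v ⬝ᵥ v).re)/(2*t) := by gcongr
    _ = 1/(2*t) * (star u ⬝ᵥ u).re + t/2 * (star v ⬝ᵥ v).re := by field_simp



section
variable {n : ℕ} (f : Module.End ℂ (Fin n → ℂ))

noncomputable def S : Finset ℂ := f.finite_hasEigenvalue.toFinset

lemma mem_S {μ : ℂ} : μ ∈ S f ↔ f.HasEigenvalue μ := Set.Finite.mem_toFinset _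

noncomputable abbrev W (μ : ℂ) : Submodule ℂ (Fin n → ℂ) := f.maxGenEigenspace μ

lemma hInt : DirectSum.IsInternal (fun μ : (S f) => W f μ) := by
  apply DirectSum.isInternal_submodule_of_iSupIndep_of_iSup_eq_top
  · exact (f.independent_maxGenEigenspace).comp Subtype.val_injective
  · rw [iSup_subtype]
    rw [← top_le_iff, ← f.iSup_maxGenEigenspace_eq_top]
    apply iSup_le
    intro μ
    by_cases h : μ ∈ S f
    · exact le_iSup₂ (f := fun μ _ => W f μ) μ h
    · have : W f μ = ⊥ := by
        by_contra hb
        apply h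
        rw [mem_S]
        have hb' : f.HasUnifEigenvalue μ ⊤ := hb
        exact (Module.End.hasUnifEigenvalue_iff_hasUnifEigenvalue_one (by simp)).mp hb'
      simp [this]
end

section
variable {n : ℕ} (f : Module.End ℂ (Fin n → ℂ))

noncomputable def Ldec := LinearEquiv.ofBijective
  (DirectSum.coeLinearMap fun μ : (S f) => W f μ) (hInt f)

noncomputable def proj (μ : (S f)) : Module.End ℂ (Fin n → ℂ) :=
  (W f μ).subtype ∘ₗ (DirectSum.component ℂ (S f) (fun ν : (S f) => W f ν) μ)
    ∘ₗ ((Ldec f).symm : (Fin n → ℂ) →ₗ[ℂ] _)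

lemma proj_apply (μ : (S f)) (x : Fin n → ℂ) :
    proj f μ x = ((Ldec f).symm x μ : Fin n → ℂ) := rfl

lemma proj_mem (μ : (S f)) (x : Fin n → ℂ) : proj f μ x ∈ W f μ :=
  ((Ldec f).symm x μ).2

lemma sum_proj (x : Fin n → ℂ) : ∑ μ : (S f), proj f μ x = x := by
  classical
  conv_rhs => rw [← (Ldec f).apply_symm_apply x]
  set y := (Ldec f).symm x
  have hy : y = ∑ μ : (S f), DirectSum.of (fun ν : (S f) => W f ν) μ (y μ) :=
    (DirectSum.sum_univ_of y).symm
  calc ∑ μ : (S f), proj f μ x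
      = ∑ μ : (S f), (DirectSum.coeLinearMap fun μ : (S f) => W f μ)
          (DirectSum.of (fun ν : (S f) => W f ν) μ (y μ)) := by
        refine Finset.sum_congr rfl fun μ _ => ?_
        rw [proj_apply, DirectSum.coeLinearMap_of]
    _ = (DirectSum.coeLinearMap fun μ : (S f) => W f μ) y := by
        rw [← map_sum, ← hy]
    _ = Ldec f y := rfl

lemma proj_comm (μ : (S f)) (x : Fin n → ℂ) :
    f (proj f μ x) = proj f μ (f x) := by
  classical
  have hmem : ∀ ν : (S f), f (proj f ν x) ∈ W f ν := fun ν =>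
    Module.End.mapsTo_maxGenEigenspace_of_comm (Commute.refl f) ν (proj_mem f ν x)
  set z : ⨁ ν : (S f), W f ν :=
    ∑ ν : (S f), DirectSum.of (fun ν : (S f) => W f ν) ν ⟨f (proj f ν x), hmem ν⟩ with hz
  have hLz : Ldec f z = f x := by
    rw [hz, map_sum]
    have : ∀ ν : (S f), Ldec f (DirectSum.of (fun ν : (S f) => W f ν) ν
        ⟨f (proj f ν x), hmem ν⟩) = f (proj f ν x) := fun ν =>
      DirectSum.coeLinearMap_of _ _ _
    rw [Finset.sum_congr rfl fun ν _ => this ν, ← map_sum, sum_proj]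
  have hd : (Ldec f).symm (f x) = z := by rw [← hLz, LinearEquiv.symm_apply_apply]
  rw [proj_apply f μ (f x), hd]
  have : z μ = ⟨f (proj f μ x), hmem μ⟩ := by
    rw [hz]
    rw [DFinsupp.finset_sum_apply]
    rw [Finset.sum_eq_single μ]
    · exact DirectSum.of_eq_same _ _
    · intro ν _ hν
      exact DirectSum.of_eq_of_ne _ _ _ hν.symm
    · simp
  rw [this]

end

section
variable {n : ℕ} (f : Module.End ℂ (Fin n → ℂ))

lemma proj_nilp (μ : (S f)) (x : Fin n → ℂ) :
    ((f - (μ:ℂ) • 1)^n) (proj f μ x) = 0 := by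
  have h := proj_mem f μ x
  rw [show W f ↑μ = f.maxGenEigenspace ↑μ from rfl,
    Module.End.maxGenEigenspace_eq_genEigenspace_finrank, Module.finrank_fin_fun,
    Module.End.mem_genEigenspace_nat] at h
  exact h

/-- sesquilinear form x, y ↦ ⟨T x, T y⟩ -/
noncomputable def sesq (T : Module.End ℂ (Fin n → ℂ)) :
    (Fin n → ℂ) →ₛₗ[starRingEnd ℂ] (Fin n → ℂ) →ₗ[ℂ] ℂ :=
  LinearMap.mk₂'ₛₗ (starRingEnd ℂ) (RingHom.id ℂ) (fun x y => star (T x) ⬝ᵥ T y)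
    (fun x₁ x₂ y => by simp [map_add, star_add, add_dotProduct])
    (fun c x y => by
      show star (T (c • x)) ⬝ᵥ T y = (starRingEnd ℂ) c • (star (T x) ⬝ᵥ T y)
      rw [_root_.map_smul, star_smul, smul_dotProduct]
      rfl)
    (fun x y₁ y₂ => by simp [map_add, dotProduct_add])
    (fun c x y => by
      show star (T x) ⬝ᵥ T (c • y) = (RingHom.id ℂ) c • (star (T x) ⬝ᵥ T y)
      rw [_root_.map_smul, dotProduct_smul]
      rfl)

lemma sesq_apply (T : Module.End ℂ (Fin n → ℂ)) (x y : Fin n → ℂ) :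
    sesq T x y = star (T x) ⬝ᵥ T y := rfl
end

section
variable {n : ℕ} (f : Module.End ℂ (Fin n → ℂ)) (k : ℝ)

noncomputable def eps (μ : (S f)) : ℝ := -k - (μ:ℂ).re

noncomputable def cc (μ : (S f)) (j : ℕ) : ℝ := (((eps f k μ)⁻¹)^j)^2

noncomputable def TT (μ : (S f)) (j : ℕ) : Module.End ℂ (Fin n → ℂ) :=
  ((f - (μ:ℂ) • 1)^j) ∘ₗ proj f μ

noncomputable def Phi : (Fin n → ℂ) →ₛₗ[starRingEnd ℂ] (Fin n → ℂ) →ₗ[ℂ] ℂ :=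
  ∑ μ : (S f), ∑ j ∈ Finset.range n, ((cc f k μ j : ℂ)) • sesq (TT f μ j)

lemma Phi_apply (x y : Fin n → ℂ) :
    Phi f k x y = ∑ μ : (S f), ∑ j ∈ Finset.range n,
      (cc f k μ j : ℂ) * (star (TT f μ j x) ⬝ᵥ TT f μ j y) := by
  simp [Phi, LinearMap.sum_apply, sesq_apply, Finset.sum_apply]
end

section
variable {n : ℕ} (f : Module.End ℂ (Fin n → ℂ)) (k : ℝ)

lemma Phi_conj (x y : Fin n → ℂ) :
    Phi f k y x = starRingEnd ℂ (Phi f k x y) := by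
  rw [Phi_apply, Phi_apply, map_sum]
  refine Finset.sum_congr rfl fun μ _ => ?_
  rw [map_sum]
  refine Finset.sum_congr rfl fun j _ => ?_
  rw [_root_.map_mul, Complex.conj_ofReal, ← dot_conj]

lemma Phi_self_re (x : Fin n → ℂ) :
    (Phi f k x x).re = ∑ μ : (S f), ∑ j ∈ Finset.range n,
      cc f k μ j * (star (TT f μ j x) ⬝ᵥ TT f μ j x).re := by
  rw [Phi_apply, Complex.re_sum]
  refine Finset.sum_congr rfl fun μ _ => ?_
  rw [Complex.re_sum]
  exact Finset.sum_congr rfl fun j _ => Complex.re_ofReal_mul _ _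

lemma cc_nonneg (μ : (S f)) (j : ℕ) : 0 ≤ cc f k μ j := sq_nonneg _

lemma Phi_self_re_nonneg (x : Fin n → ℂ) : 0 ≤ (Phi f k x x).re := by
  rw [Phi_self_re]
  refine Finset.sum_nonneg fun μ _ => Finset.sum_nonneg fun j _ => ?_
  exact mul_nonneg (cc_nonneg f k μ j) (dot_self_re_nonneg _)

lemma Phi_self_re_pos (hn : 0 < n) {x : Fin n → ℂ} (hx : x ≠ 0) :
    0 < (Phi f k x x).re := by
  rcases lt_or_eq_of_le (Phi_self_re_nonneg f k x) with h | h
  · exact h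
  exfalso
  apply hx
  rw [Phi_self_re] at h
  have hterm := fun μ j hj => (Finset.sum_eq_zero_iff_of_nonneg
      (fun j _ => mul_nonneg (cc_nonneg f k μ j) (dot_self_re_nonneg _))).mp
      ((Finset.sum_eq_zero_iff_of_nonneg (fun μ _ => Finset.sum_nonneg fun j _ =>
        mul_nonneg (cc_nonneg f k μ j) (dot_self_re_nonneg _))).mp h.symm μ
        (Finset.mem_univ μ)) j hj
  have hproj : ∀ μ : (S f), proj f μ x = 0 := by
    intro μ
    have h0 := hterm μ 0 (Finset.mem_range.mpr hn)
    have hc0 : cc f k μ 0 = 1 := by simp [cc]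
    rw [hc0, one_mul] at h0
    have := dot_self_re_eq_zero h0
    simpa [TT, pow_zero] using this
  rw [← sum_proj f x]
  exact Finset.sum_eq_zero fun μ _ => hproj μ
end
section
variable {n : ℕ} (f : Module.End ℂ (Fin n → ℂ)) (k : ℝ)

lemma dot_self_coe {m : Type*} [Fintype m] (v : m → ℂ) :
    star v ⬝ᵥ v = (((star v ⬝ᵥ v).re : ℝ) : ℂ) := by
  rw [dot_self_eq, Complex.ofReal_re]

lemma main_est (hs : ∀ μ : (S f), (μ:ℂ).re < -k) (x : Fin n → ℂ) :
    (Phi f k x (f x)).re ≤ -k * (Phi f k x x).re := by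
  rw [Phi_apply, Phi_self_re, Complex.re_sum, Finset.mul_sum]
  refine Finset.sum_le_sum fun μ _ => ?_
  rw [Complex.re_sum]
  set N := f - (μ:ℂ) • 1 with hN
  set u := proj f μ x with hu
  have hεpos : 0 < eps f k μ := by
    have := hs μ; simp only [eps]; linarith
  set v : ℕ → (Fin n → ℂ) := fun j => (N^j) u with hv
  set s : ℕ → ℝ := fun j => (star (v j) ⬝ᵥ v j).re with hsdef
  set c : ℕ → ℝ := fun j => cc f k μ j with hcdef
  set g : ℕ → ℝ := fun j => c j * s j with hgdef
  set ε := eps f k μ with hεdef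
  have hTx : ∀ j, TT f μ j x = v j := fun j => rfl
  have hTfx : ∀ j, TT f μ j (f x) = v (j+1) + (μ:ℂ) • v j := by
    intro j
    show (N^j) (proj f μ (f x)) = _
    rw [← proj_comm]
    have hfu : f u = N u + (μ:ℂ) • u := by
      simp only [hN, LinearMap.sub_apply, LinearMap.smul_apply, Module.End.one_apply]
      abel
    rw [hfu, map_add, LinearMap.map_smul]
    have hpow : (N^j) (N u) = (N^(j+1)) u := by
      rw [pow_succ]; rfl
    rw [hpow]
  have hgnonneg : ∀ j, 0 ≤ g j := fun j =>
    mul_nonneg (cc_nonneg f k μ j) (dot_self_re_nonneg _)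
  have hterm : ∀ j ∈ Finset.range n,
      ((cc f k μ j : ℂ) * (star (TT f μ j x) ⬝ᵥ TT f μ j (f x))).re
      ≤ ((μ:ℂ).re + ε/2) * g j + ε/2 * g (j+1) := by
    intro j _
    rw [hTx, hTfx, Complex.re_ofReal_mul]
    have hsplit : (star (v j) ⬝ᵥ (v (j+1) + (μ:ℂ) • v j))
        = star (v j) ⬝ᵥ v (j+1) + (μ:ℂ) * ((s j : ℝ) : ℂ) := by
      rw [dotProduct_add, dotProduct_smul, smul_eq_mul]
      congr 1
      rw [dot_self_coe]
    rw [hsplit, add_re]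
    have hμre : ((μ:ℂ) * ((s j : ℝ) : ℂ)).re = (μ:ℂ).re * s j := by
      rw [mul_comm, Complex.re_ofReal_mul, mul_comm]
    rw [hμre]
    have hag := amgm (v j) (v (j+1)) (inv_pos.mpr hεpos)
    have hεne : ε ≠ 0 := ne_of_gt hεpos
    have hc1 : c j * (1/(2*ε⁻¹) * s j) = ε/2 * g j := by
      rw [hgdef]; field_simp
    have hc2 : c j * (ε⁻¹/2 * s (j+1)) = ε/2 * g (j+1) := by
      rw [hgdef]
      show cc f k μ j * _ = ε/2 * (cc f k μ (j+1) * s (j+1))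
      simp only [cc, ← hεdef]
      field_simp
      have hεε : ε ^ 2 * (1 / ε) ^ 2 = 1 := by rw [← mul_pow, mul_one_div_cancel hεne, one_pow]
      linear_combination (-(((1 / ε) ^ j) ^ 2 * s (j + 1))) * hεε
    have hmul := mul_le_mul_of_nonneg_left hag (cc_nonneg f k μ j)
    rw [mul_add] at hmul
    rw [hc1, hc2] at hmul
    show c j * ((star (v j) ⬝ᵥ v (j+1)).re + (μ:ℂ).re * s j) ≤ _
    have hexp : c j * ((star (v j) ⬝ᵥ v (j+1)).re + (μ:ℂ).re * s j)
        = c j * (star (v j) ⬝ᵥ v (j+1)).re + (μ:ℂ).re * g j := by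
      rw [hgdef]; ring
    rw [hexp]
    linarith
  have hshift : ∑ j ∈ Finset.range n, g (j+1) ≤ ∑ j ∈ Finset.range n, g j := by
    have h1 : ∑ j ∈ Finset.range (n+1), g j
        = ∑ j ∈ Finset.range n, g (j+1) + g 0 := Finset.sum_range_succ' g n
    rw [Finset.sum_range_succ] at h1
    have hgn : g n = 0 := by
      have hvn : v n = 0 := proj_nilp f μ x
      have : s n = 0 := by rw [hsdef]; simp [hvn]
      rw [hgdef]; simp [this]
    have hg0 : 0 ≤ g 0 := hgnonneg 0
    linarith
  calc ∑ j ∈ Finset.range n,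
        ((cc f k μ j : ℂ) * (star (TT f μ j x) ⬝ᵥ TT f μ j (f x))).re
      ≤ ∑ j ∈ Finset.range n, (((μ:ℂ).re + ε/2) * g j + ε/2 * g (j+1)) :=
        Finset.sum_le_sum hterm
    _ = ((μ:ℂ).re + ε/2) * ∑ j ∈ Finset.range n, g j
        + ε/2 * ∑ j ∈ Finset.range n, g (j+1) := by
        rw [Finset.sum_add_distrib, ← Finset.mul_sum, ← Finset.mul_sum]
    _ ≤ ((μ:ℂ).re + ε/2) * ∑ j ∈ Finset.range n, g j
        + ε/2 * ∑ j ∈ Finset.range n, g j := by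
        have := mul_le_mul_of_nonneg_left hshift (le_of_lt (half_pos hεpos))
        linarith
    _ = -k * ∑ j ∈ Finset.range n, g j := by
        have hε : ε = -k - (μ:ℂ).re := rfl
        rw [hε]
        ring
    _ = -k * ∑ j ∈ Finset.range n, c j * (star (TT f μ j x) ⬝ᵥ TT f μ j x).re := by
        congr 1
end

end Lyap

open Lyap

/-- Lyapunov inner product: if all (complex) eigenvalues of a real `n × n`
matrix `A` have real part less than `-k`, then there is an inner product on
`ℝⁿ`, represented by a symmetric positive definite matrix `B`, such that
`⟨A x, x⟩_B ≤ -k ⟨x, x⟩_B` for all `x`. -/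
theorem lyapunov_inner_product {n : ℕ} (A : Matrix (Fin n) (Fin n) ℝ) (k : ℝ)
    (hk : 0 < k)
    (hspec : ∀ μ ∈ spectrum ℂ (A.map (Complex.ofReal ·)), μ.re < -k) :
    ∃ B : Matrix (Fin n) (Fin n) ℝ, B.IsSymm ∧ B.PosDef ∧
      ∀ x : Fin n → ℝ,
        (A.mulVec x) ⬝ᵥ (B.mulVec x) ≤ -k * (x ⬝ᵥ (B.mulVec x)) := by
  classical
  set A₀ : Matrix (Fin n) (Fin n) ℂ := A.map (Complex.ofReal ·) with hA₀
  set f : Module.End ℂ (Fin n → ℂ) := Matrix.toLinAlgEquiv' A₀ with hf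
  have hfapp : ∀ z, f z = A₀.mulVec z := fun z => Matrix.toLinAlgEquiv'_apply _ _
  have hs : ∀ μ : (S f), ((μ:ℂ)).re < -k := by
    intro μ
    have hμ : f.HasEigenvalue (μ:ℂ) := (mem_S f).mp μ.2
    have hmem : (μ:ℂ) ∈ spectrum ℂ f := Module.End.hasEigenvalue_iff_mem_spectrum.mp hμ
    have hmem' : (μ:ℂ) ∈ spectrum ℂ A₀ := by
      rw [← AlgEquiv.spectrum_eq Matrix.toLinAlgEquiv' A₀]
      exact hmem
    exact hspec _ hmem'
  set cR : (Fin n → ℝ) → (Fin n → ℂ) := fun x i => (x i : ℂ) with hcR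
  have hcR_mulVec : ∀ x : Fin n → ℝ, cR (A.mulVec x) = f (cR x) := by
    intro x
    funext i
    rw [hfapp]
    simp only [hcR, hA₀, Matrix.mulVec, dotProduct, Matrix.map_apply]
    push_cast
    rfl
  have hcR_zero : ∀ {x : Fin n → ℝ}, cR x = 0 → x = 0 := by
    intro x h
    funext i
    have := congrFun h i
    simpa [hcR] using this
  set e : Fin n → (Fin n → ℂ) := fun i => Pi.single i 1 with he
  have hexp : ∀ u : Fin n → ℝ, cR u = ∑ i, ((u i : ℂ)) • e i := by
    intro u
    funext j
    simp only [hcR, he, Finset.sum_apply, Pi.smul_apply, Pi.single_apply, smul_eq_mul,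
      mul_ite, mul_one, mul_zero]
    simp
  set B : Matrix (Fin n) (Fin n) ℝ :=
    Matrix.of (fun i j => (Phi f k (e i) (e j)).re) with hB
  have bridge : ∀ u v : Fin n → ℝ,
      u ⬝ᵥ B.mulVec v = (Phi f k (cR u) (cR v)).re := by
    intro u v
    have hrhs : Phi f k (cR u) (cR v)
        = ∑ i, ∑ j, ((u i : ℂ)) * (((v j : ℂ)) * Phi f k (e i) (e j)) := by
      rw [hexp u, hexp v, map_sum (Phi f k) (fun i => ((u i : ℂ)) • e i) Finset.univ]
      rw [LinearMap.sum_apply]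
      refine Finset.sum_congr rfl fun i _ => ?_
      rw [LinearMap.map_smulₛₗ, LinearMap.smul_apply]
      rw [map_sum (Phi f k (e i))]
      simp only [LinearMap.map_smul, smul_eq_mul, Complex.conj_ofReal, starRingEnd_apply]
      rw [Finset.mul_sum]
      simp [RCLike.star_def, Complex.conj_ofReal]
    rw [hrhs, Complex.re_sum]
    simp only [dotProduct, Matrix.mulVec, hB, Matrix.of_apply]
    refine Finset.sum_congr rfl fun i _ => ?_
    rw [Complex.re_sum, Finset.mul_sum]
    refine Finset.sum_congr rfl fun j _ => ?_
    rw [Complex.re_ofReal_mul, Complex.re_ofReal_mul]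
    ring
  have hsymm : B.IsSymm := by
    ext i j
    show B j i = B i j
    simp only [hB, Matrix.of_apply]
    rw [Phi_conj]
    exact Complex.conj_re _
  refine ⟨B, hsymm, posDef_iff_dotProduct_mulVec.mpr ⟨?_, ?_⟩, ?_⟩
  · show B.conjTranspose = B
    ext i j
    rw [Matrix.conjTranspose_apply]
    have := congrFun (congrFun hsymm i) j
    simpa using this
  · intro x hx
    have hn : 0 < n := by
      rcases Nat.eq_zero_or_pos n with h0 | h
      · subst h0
        exact absurd (funext fun i : Fin 0 => i.elim0) hx
      · exact h
    have hxc : cR x ≠ 0 := fun h => hx (hcR_zero h)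
    have hpos := Phi_self_re_pos f k hn hxc
    have : star x ⬝ᵥ B.mulVec x = x ⬝ᵥ B.mulVec x := by
      congr 1
    rw [this, bridge]
    exact hpos
  · intro x
    have h1 : (A.mulVec x) ⬝ᵥ B.mulVec x = (Phi f k (f (cR x)) (cR x)).re := by
      rw [bridge, hcR_mulVec]
    have h2 : (Phi f k (f (cR x)) (cR x)).re = (Phi f k (cR x) (f (cR x))).re := by
      rw [Phi_conj]
      exact Complex.conj_re _
    have h3 := main_est f k hs (cR x)
    rw [h1, h2, bridge x x]
    exact h3
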